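/- Let 𝔽 ⊆ 𝔽̂ be a finite field extension, C an 𝔽-subspace of 𝔽̂^n, and f : C → 𝔽̂^n an 𝔽-linear map that preserves the Rosenbloom–Tsfasman weight. Then f extends to an RT-weight-preserving 𝔽-linear map on all of 𝔽̂^n. -/

import Mathlib

open Finset Classical in
/-- The Rosenbloom–Tsfasman weight of `v ∈ K^n`: `0` if `v = 0`, and `max{i : vᵢ ≠ 0}`
(with positions numbered `1,…,n`) otherwise. -/
noncomputable def rtWeight {M : Type*} [Zero M] {n : ℕ} (v : Fin n → M) : ℕ :=
  (Finset.univ.filter (fun i : Fin n => v i ≠ 0)).sup (fun i => i.1 + 1)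

lemma rtWeight_le_iff {M : Type*} [Zero M] {n : ℕ} {v : Fin n → M} {m : ℕ} :
    rtWeight v ≤ m ↔ ∀ i : Fin n, v i ≠ 0 → i.1 + 1 ≤ m := by
  classical
  simp [rtWeight, Finset.sup_le_iff]

lemma le_rtWeight {M : Type*} [Zero M] {n : ℕ} {v : Fin n → M} {i : Fin n} (h : v i ≠ 0) :
    i.1 + 1 ≤ rtWeight v := by
  exact (rtWeight_le_iff.mp le_rfl) i h

/-- Extend an injective linear map defined on a subspace of a finite-dimensional space to an
injective linear map on the whole space. -/
lemma exists_injective_extend {F V : Type*} [Field F] [AddCommGroup V] [Module F V]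
    [FiniteDimensional F V] (D : Submodule F V) (φ : D →ₗ[F] V)
    (hφ : Function.Injective φ) :
    ∃ ψ : V →ₗ[F] V, Function.Injective ψ ∧ ∀ d : D, ψ d = φ d := by
  obtain ⟨D', hD'⟩ := D.exists_isCompl
  obtain ⟨E', hE'⟩ := (LinearMap.range φ).exists_isCompl
  have h1 : Module.finrank F D' = Module.finrank F E' := by
    have a := Submodule.finrank_add_eq_of_isCompl hD'
    have b := Submodule.finrank_add_eq_of_isCompl hE'
    have c : Module.finrank F ↥(LinearMap.range φ) = Module.finrank F D :=
      LinearMap.finrank_range_of_inj hφ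
    omega
  let e : D' ≃ₗ[F] E' := LinearEquiv.ofFinrankEq _ _ h1
  refine ⟨LinearMap.ofIsCompl hD' φ (E'.subtype ∘ₗ e.toLinearMap), ?_,
    fun d => LinearMap.ofIsCompl_left_apply hD' d⟩
  rw [← LinearMap.ker_eq_bot, Submodule.eq_bot_iff]
  intro x hx
  obtain ⟨u, v, rfl, -⟩ := Submodule.existsUnique_add_of_isCompl hD' x
  have hx' : φ u + E'.subtype (e v) = 0 := by
    simpa using hx
  have hmem : φ u ∈ LinearMap.range φ ⊓ E' := by
    refine ⟨⟨u, rfl⟩, ?_⟩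
    have : φ u = -(E'.subtype (e v)) := by
      rw [eq_neg_iff_add_eq_zero]; exact hx'
    rw [this]
    exact neg_mem (e v).2
  have hu0 : φ u = 0 := by
    have := hE'.disjoint.le_bot hmem
    simpa using this
  have hv0 : (E'.subtype (e v) : V) = 0 := by
    rw [hu0, zero_add] at hx'; exact hx'
  have hu : u = 0 := hφ (by rw [hu0, map_zero])
  have hv : v = 0 := by
    have : e v = 0 := Subtype.ext hv0
    simpa using congrArg e.symm this
  rw [hu, hv]; simp

/-- Factor a linear map through another one with larger kernel. -/
lemma exists_factor {F V W U : Type*} [Field F] [AddCommGroup V] [Module F V]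
    [AddCommGroup W] [Module F W] [AddCommGroup U] [Module F U]
    (L : V →ₗ[F] W) (M : V →ₗ[F] U) (h : LinearMap.ker L ≤ LinearMap.ker M) :
    ∃ N : W →ₗ[F] U, ∀ v, N (L v) = M v := by
  let Mb : (V ⧸ LinearMap.ker L) →ₗ[F] U := (LinearMap.ker L).liftQ M h
  let φ : LinearMap.range L →ₗ[F] U := Mb ∘ₗ L.quotKerEquivRange.symm.toLinearMap
  obtain ⟨N, hN⟩ := LinearMap.exists_extend φ
  refine ⟨N, fun v => ?_⟩
  have h1 : N (L v) = φ ⟨L v, LinearMap.mem_range_self L v⟩ := by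
    have := congrArg (fun (G : _ →ₗ[F] U) => G ⟨L v, LinearMap.mem_range_self L v⟩) hN
    simpa using this
  rw [h1]
  show Mb (L.quotKerEquivRange.symm ⟨L v, _⟩) = M v
  rw [LinearMap.quotKerEquivRange_symm_apply_image]
  simp [Mb, Submodule.mkQ_apply]

/-- Factor with an injective factor, when the kernels agree. -/
lemma exists_inj_factor {F V W : Type*} [Field F] [AddCommGroup V] [Module F V]
    [AddCommGroup W] [Module F W] [FiniteDimensional F W]
    (L M : V →ₗ[F] W) (h : LinearMap.ker L = LinearMap.ker M) :
    ∃ ψ : W →ₗ[F] W, Function.Injective ψ ∧ ∀ v, ψ (L v) = M v := by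
  let Mb : (V ⧸ LinearMap.ker L) →ₗ[F] W := (LinearMap.ker L).liftQ M h.le
  let φ : LinearMap.range L →ₗ[F] W := Mb ∘ₗ L.quotKerEquivRange.symm.toLinearMap
  have hφv : ∀ v : V, φ ⟨L v, LinearMap.mem_range_self L v⟩ = M v := by
    intro v
    show Mb (L.quotKerEquivRange.symm ⟨L v, _⟩) = M v
    rw [LinearMap.quotKerEquivRange_symm_apply_image]
    simp [Mb, Submodule.mkQ_apply]
  have hφinj : Function.Injective φ := by
    rw [← LinearMap.ker_eq_bot, Submodule.eq_bot_iff]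
    rintro ⟨x, hx⟩ hx0
    obtain ⟨v, rfl⟩ := hx
    have hM : M v = 0 := by
      rw [← hφv v]
      simpa using hx0
    have hL : L v = 0 := by
      have : v ∈ LinearMap.ker L := by rw [h]; exact hM
      exact this
    exact Subtype.ext hL
  obtain ⟨ψ, hinj, hext⟩ := exists_injective_extend (LinearMap.range L) φ hφinj
  refine ⟨ψ, hinj, fun v => ?_⟩
  have : ψ ((⟨L v, LinearMap.mem_range_self L v⟩ : LinearMap.range L) : W)
      = φ ⟨L v, LinearMap.mem_range_self L v⟩ := hext _
  simpa [hφv v] using this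

/-- Let `𝔽 ⊆ 𝔽̂` be an extension of finite fields, `C` an `𝔽`-subspace of `𝔽̂^n`, and
`f : C → 𝔽̂^n` an `𝔽`-linear (sublinear) map preserving the Rosenbloom–Tsfasman weight.
Then `f` extends to an RT-weight-preserving `𝔽`-linear map on all of `𝔽̂^n`. -/
theorem rt_extension_sublinear
    (F K : Type*) [Field F] [Fintype F] [Field K] [Fintype K] [Algebra F K]
    (n : ℕ) (C : Submodule F (Fin n → K)) (f : C →ₗ[F] (Fin n → K))
    (hf : ∀ v : C, rtWeight (f v) = rtWeight (v : Fin n → K)) :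
    ∃ g : (Fin n → K) →ₗ[F] (Fin n → K),
      (∀ v : C, g (v : Fin n → K) = f v) ∧
      ∀ w : Fin n → K, rtWeight (g w) = rtWeight w := by
  classical
  -- truncation maps: `T i` keeps only coordinates `> i`
  set T : Fin n → ((Fin n → K) →ₗ[F] (Fin n → K)) := fun i =>
    LinearMap.pi (fun j => if i < j then LinearMap.proj j else 0) with hTdef
  have hT : ∀ (i : Fin n) (w : Fin n → K) (j : Fin n),
      T i w j = if i < j then w j else 0 := by
    intro i w j
    rw [hTdef]
    simp only [LinearMap.pi_apply]
    split <;> simp_all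
  have hTzero : ∀ (i : Fin n) (w : Fin n → K), rtWeight w ≤ i.1 + 1 → T i w = 0 := by
    intro i w hw
    funext j
    rw [hT]
    split
    · rename_i hij
      by_contra hwj
      have h1 := le_rtWeight hwj
      have h2 : i.1 < j.1 := hij
      omega
    · rfl
  -- the injective coordinate maps ψ
  have key1 : ∀ i : Fin n, ∃ ψ : K →ₗ[F] K, Function.Injective ψ ∧
      ∀ v : C, T i (v : Fin n → K) = 0 → ψ ((v : Fin n → K) i) = f v i := by
    intro i
    set P : Submodule F (Fin n → K) := C ⊓ LinearMap.ker (T i) with hP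
    let ι : P →ₗ[F] C := Submodule.inclusion inf_le_left
    set L : P →ₗ[F] K := (LinearMap.proj i : (Fin n → K) →ₗ[F] K) ∘ₗ P.subtype with hL
    set M : P →ₗ[F] K := (LinearMap.proj i : (Fin n → K) →ₗ[F] K) ∘ₗ f ∘ₗ ι with hM
    have hwle : ∀ x : P, rtWeight (x : Fin n → K) ≤ i.1 + 1 := by
      intro x
      rw [rtWeight_le_iff]
      intro j hj
      have hker : T i (x : Fin n → K) = 0 := x.2.2
      have hTx := congrFun hker j
      rw [hT] at hTx
      by_cases hij : i < j
      · rw [if_pos hij] at hTx; exact absurd hTx hj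
      · have : j.1 ≤ i.1 := by
          rcases Fin.lt_or_le i j with h | h
          · exact absurd h hij
          · exact h
        omega
    have hfw : ∀ x : P, rtWeight ((f (ι x) : Fin n → K)) ≤ i.1 + 1 := by
      intro x
      rw [hf]
      exact hwle x
    have hker : LinearMap.ker L = LinearMap.ker M := by
      ext x
      simp only [LinearMap.mem_ker, hL, hM, LinearMap.comp_apply, LinearMap.proj_apply,
        Submodule.coe_subtype]
      constructor
      · intro hx
        -- x has weight ≤ i, hence f x too, hence its i-th coord vanishes
        have hwx : rtWeight (x : Fin n → K) ≤ i.1 := by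
          rw [rtWeight_le_iff]
          intro j hj
          have h1 := (rtWeight_le_iff.mp (hwle x)) j hj
          have : j ≠ i := fun h => hj (h ▸ hx)
          have : j.1 ≠ i.1 := fun h => this (Fin.ext h)
          omega
        have hfx : rtWeight ((f (ι x) : Fin n → K)) ≤ i.1 := by rw [hf]; exact hwx
        by_contra hc
        have := le_rtWeight hc
        omega
      · intro hx
        -- f x has weight ≤ i, hence x too, hence its i-th coord vanishes
        have hfx : rtWeight ((f (ι x) : Fin n → K)) ≤ i.1 := by
          rw [rtWeight_le_iff]
          intro j hj
          have h1 := (rtWeight_le_iff.mp (hfw x)) j hj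
          have : j ≠ i := fun h => hj (h ▸ hx)
          have : j.1 ≠ i.1 := fun h => this (Fin.ext h)
          omega
        have hwx : rtWeight (x : Fin n → K) ≤ i.1 := by
          have hco : ((ι x : C) : Fin n → K) = (x : Fin n → K) := rfl
          rw [← hco, ← hf]; exact hfx
        by_contra hc
        have := le_rtWeight hc
        omega
    obtain ⟨ψ, hinj, hfac⟩ := exists_inj_factor L M hker
    refine ⟨ψ, hinj, fun v hv => ?_⟩
    have hvP : (v : Fin n → K) ∈ P := ⟨v.2, hv⟩
    have := hfac ⟨(v : Fin n → K), hvP⟩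
    simp only [hL, hM, LinearMap.comp_apply, LinearMap.proj_apply, Submodule.coe_subtype] at this
    convert this using 3
    exact Subtype.ext rfl
  choose ψ hψinj hψ using key1
  -- the correction maps η
  have key2 : ∀ i : Fin n, ∃ η : (Fin n → K) →ₗ[F] K,
      ∀ v : C, η (T i (v : Fin n → K)) = f v i - ψ i ((v : Fin n → K) i) := by
    intro i
    have h : LinearMap.ker ((T i) ∘ₗ C.subtype) ≤
        LinearMap.ker (((LinearMap.proj i : (Fin n → K) →ₗ[F] K) ∘ₗ f)
          - ((ψ i) ∘ₗ (LinearMap.proj i : (Fin n → K) →ₗ[F] K) ∘ₗ C.subtype)) := by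
      intro v hv
      simp only [LinearMap.mem_ker, LinearMap.comp_apply, Submodule.coe_subtype] at hv ⊢
      simp only [LinearMap.sub_apply, LinearMap.comp_apply, LinearMap.proj_apply,
        Submodule.coe_subtype]
      rw [hψ i v hv]
      ring
    obtain ⟨N, hN⟩ := exists_factor _ _ h
    refine ⟨N, fun v => ?_⟩
    have := hN v
    simp only [LinearMap.comp_apply, Submodule.coe_subtype, LinearMap.sub_apply,
      LinearMap.proj_apply] at this
    rw [this]
  choose η hη using key2
  -- the global map
  refine ⟨LinearMap.pi (fun i => (ψ i) ∘ₗ (LinearMap.proj i) + (η i) ∘ₗ (T i)), ?_, ?_⟩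
  · intro v
    funext i
    simp only [LinearMap.pi_apply, LinearMap.add_apply, LinearMap.comp_apply,
      LinearMap.proj_apply]
    rw [hη i v]
    ring
  · intro w
    set g : (Fin n → K) → (Fin n → K) := fun w =>
      LinearMap.pi (fun i => (ψ i) ∘ₗ (LinearMap.proj i) + (η i) ∘ₗ (T i)) w with hg
    show rtWeight (g w) = rtWeight w
    have hgw : ∀ i, g w i = ψ i (w i) + η i (T i w) := by
      intro i
      simp [hg, LinearMap.pi_apply]
    refine le_antisymm ?_ ?_
    · rw [rtWeight_le_iff]
      intro j hj
      by_contra hc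
      push_neg at hc
      have hw : rtWeight w ≤ j.1 := by omega
      have hwj : w j = 0 := by
        by_contra h
        have := le_rtWeight h
        omega
      have hTw : T j w = 0 := hTzero j w (by omega)
      rw [hgw, hwj, map_zero, hTw, map_zero, add_zero] at hj
      exact hj rfl
    · by_cases hw0 : w = 0
      · subst hw0
        have : g 0 = 0 := by
          funext i
          rw [hgw]
          simp
        rw [this]
      · obtain ⟨k, hk⟩ := Function.ne_iff.mp hw0
        have hk' : w k ≠ 0 := by simpa using hk
        have hne : (Finset.univ.filter (fun i : Fin n => w i ≠ 0)).Nonempty :=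
          ⟨k, Finset.mem_filter.mpr ⟨Finset.mem_univ _, hk'⟩⟩
        obtain ⟨i, hmem, hsup⟩ := Finset.exists_mem_eq_sup _ hne (fun i : Fin n => i.1 + 1)
        have hwi : w i ≠ 0 := by
          simp only [Finset.mem_filter] at hmem
          exact hmem.2
        have hrw : rtWeight w = i.1 + 1 := by
          rw [rtWeight]
          convert hsup using 2
        have hTw : T i w = 0 := hTzero i w (le_of_eq hrw)
        have hgi : g w i = ψ i (w i) := by rw [hgw, hTw, map_zero, add_zero]
        have hne2 : g w i ≠ 0 := by
          rw [hgi]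
          intro h
          exact hwi (hψinj i (by rw [h, map_zero]))
        have := le_rtWeight hne2
        omega
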